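/- arXiv:2603.23628 — 2 statements merged into one kernel-verified Lean document; each statement's English description precedes it below -/
import Mathlib

section
/- Fix integers d ≥ 2, N ≥ 1, K ≥ 1, and let σ be any positive semidefinite matrix on (Fin K → Fin d) with trace 1. Define J₀ := (d_S^N / d_S^{N+K}) · Π_sym^{(N+K)} + (I − Π_sym^{(N)}) ⊗ σ, where I is the identity on (Fin N → Fin d) and the tensor product produces a matrix indexed by pairs ((x,o),(x',o')). Then J₀ is positive semidefinite, Tr_O(J₀) equals the identity on (Fin N → Fin d), and Tr(J₀ · Π_sym^{(N+K)}) = d_S^N. Hence the optimal average fidelity d_S^N / d_S^{N+K} for N-to-K pure-state transposition is attained by this explicit (estimation-based) channel. -/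
open Matrix Kronecker BigOperators ComplexOrder
open Finset

noncomputable section

/-- The matrix of the permutation `π ∈ S_M` acting on the `M` tensor factors of `(ℂ^d)^{⊗M}`. -/
def permMat (d M : ℕ) (π : Equiv.Perm (Fin M)) :
    Matrix (Fin M → Fin d) (Fin M → Fin d) ℂ :=
  Matrix.of fun x y => if x = y ∘ π.symm then 1 else 0

/-- The orthogonal projector onto the symmetric subspace of `(ℂ^d)^{⊗M}`. -/
def symProj (d M : ℕ) : Matrix (Fin M → Fin d) (Fin M → Fin d) ℂ :=
  ((M.factorial : ℂ))⁻¹ • ∑ π : Equiv.Perm (Fin M), permMat d M π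

/-- The dimension `d_S^M = binom(M+d-1, d-1)` of the symmetric subspace of `(ℂ^d)^{⊗M}`. -/
def dS (d M : ℕ) : ℕ := (M + d - 1).choose (d - 1)

/-- Regard a pair of tuples as a single tuple via `Fin (N+K) ≃ Fin N ⊕ Fin K`. -/
def pairToFun (d N K : ℕ) (x : Fin N → Fin d) (o : Fin K → Fin d) :
    Fin (N + K) → Fin d :=
  fun i => Sum.elim x o (finSumFinEquiv.symm i)

/-- The projector onto the symmetric subspace of `(ℂ^d)^{⊗(N+K)}`, regarded as a matrix
indexed by pairs `((x,o),(x',o'))`. -/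
def symProjNK (d N K : ℕ) :
    Matrix ((Fin N → Fin d) × (Fin K → Fin d)) ((Fin N → Fin d) × (Fin K → Fin d)) ℂ :=
  Matrix.of fun p q =>
    symProj d (N + K) (pairToFun d N K p.1 p.2) (pairToFun d N K q.1 q.2)

/-- Partial trace over the output (second) factor. -/
def trOut {d N K : ℕ}
    (J : Matrix ((Fin N → Fin d) × (Fin K → Fin d)) ((Fin N → Fin d) × (Fin K → Fin d)) ℂ) :
    Matrix (Fin N → Fin d) (Fin N → Fin d) ℂ :=
  Matrix.of fun x x' => ∑ o : Fin K → Fin d, J (x, o) (x', o)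

/-- The explicit estimation-based Choi operator
`J₀ = (d_S^N / d_S^{N+K}) Π_sym^{(N+K)} + (1 - Π_sym^{(N)}) ⊗ σ`. -/
def estimChoi (d N K : ℕ) (σ : Matrix (Fin K → Fin d) (Fin K → Fin d) ℂ) :
    Matrix ((Fin N → Fin d) × (Fin K → Fin d)) ((Fin N → Fin d) × (Fin K → Fin d)) ℂ :=
  ((dS d N : ℂ) / (dS d (N + K) : ℂ)) • symProjNK d N K +
    ((1 : Matrix (Fin N → Fin d) (Fin N → Fin d) ℂ) - symProj d N) ⊗ₖ σ

def cnt {M d : ℕ} (x : Fin M → Fin d) (v : Fin d) : ℕ :=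
  (Finset.univ.filter fun i => x i = v).card

lemma cnt_eq_sum {M d : ℕ} (x : Fin M → Fin d) (v : Fin d) :
    cnt x v = ∑ i, if x i = v then 1 else 0 := by
  rw [cnt, Finset.card_filter]

lemma cnt_comp {M d : ℕ} (x : Fin M → Fin d) (π : Equiv.Perm (Fin M)) (v : Fin d) :
    cnt (x ∘ π) v = cnt x v := by
  rw [cnt_eq_sum, cnt_eq_sum]
  exact Equiv.sum_comp π (fun i => if x i = v then 1 else 0)

lemma cnt_sum {M d : ℕ} (x : Fin M → Fin d) : ∑ v, cnt x v = M := by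
  simp_rw [cnt_eq_sum]
  rw [Finset.sum_comm]
  simp [Finset.sum_ite_eq']

lemma exists_perm_comp {M d : ℕ} {x y : Fin M → Fin d}
    (h : ∀ v, cnt x v = cnt y v) : ∃ π : Equiv.Perm (Fin M), x ∘ π = y := by
  have e : ∀ v : Fin d, {i // y i = v} ≃ {i // x i = v} := fun v =>
    Fintype.equivOfCardEq (by
      rw [Fintype.card_subtype, Fintype.card_subtype]
      exact (h v).symm)
  refine ⟨(Equiv.sigmaFiberEquiv y).symm.trans
    ((Equiv.sigmaCongrRight e).trans (Equiv.sigmaFiberEquiv x)), ?_⟩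
  funext i
  exact (e (y i) ⟨i, rfl⟩).2

lemma card_stab {M d : ℕ} (x : Fin M → Fin d) :
    (Finset.univ.filter fun π : Equiv.Perm (Fin M) => x ∘ π = x).card
      = ∏ v, (cnt x v).factorial := by
  rw [← Fintype.card_subtype]
  rw [DomMulAct.stabilizer_card x]
  exact Finset.prod_congr rfl fun v _ => by rw [Fintype.card_subtype]; rfl

lemma card_perm_eq {M d : ℕ} (x y : Fin M → Fin d) :
    (Finset.univ.filter fun π : Equiv.Perm (Fin M) => x ∘ π = y).card
      = if ∀ v, cnt x v = cnt y v then ∏ v, (cnt x v).factorial else 0 := by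
  split_ifs with h
  · obtain ⟨π₀, hπ₀⟩ := exists_perm_comp h
    rw [← card_stab x]
    apply Finset.card_equiv (Equiv.mulRight π₀⁻¹)
    intro π
    simp only [Finset.mem_filter, Finset.mem_univ, true_and, Equiv.coe_mulRight]
    constructor
    · intro hp
      funext i
      have h1 : x (π (π₀⁻¹ i)) = y (π₀⁻¹ i) := congrFun hp (π₀⁻¹ i)
      have h2 : x (π₀ (π₀⁻¹ i)) = y (π₀⁻¹ i) := congrFun hπ₀ (π₀⁻¹ i)
      show x (π (π₀⁻¹ i)) = x i
      rw [h1, ← h2, Equiv.Perm.inv_def, Equiv.apply_symm_apply]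
    · intro hp
      funext i
      have h1 : x (π (π₀⁻¹ (π₀ i))) = x (π₀ i) := congrFun hp (π₀ i)
      have h2 : x (π₀ i) = y i := congrFun hπ₀ i
      show x (π i) = y i
      rw [← h2, ← h1, Equiv.Perm.inv_def, Equiv.symm_apply_apply]
  · rw [Finset.card_eq_zero, Finset.filter_eq_empty_iff]
    intro π _ hp
    exact h (fun v => by rw [← hp, cnt_comp])

lemma cnt_cons {K d : ℕ} (w : Fin d) (o : Fin K → Fin d) (v : Fin d) :
    cnt (Fin.cons w o) v = (if w = v then 1 else 0) + cnt o v := by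
  rw [cnt_eq_sum, Fin.sum_univ_succ, cnt_eq_sum]
  simp [eq_comm]

lemma asc_succ_left (n k : ℕ) : n.ascFactorial (k+1) = n * (n+1).ascFactorial k := by
  rw [Nat.ascFactorial_succ, ← Nat.succ_ascFactorial]

lemma key_sum (d : ℕ) : ∀ (K : ℕ) (a : Fin d → ℕ),
    (∑ o : Fin K → Fin d, ∏ v, (a v + cnt o v).factorial)
      = (∏ v, (a v).factorial) * ((∑ v, a v) + d).ascFactorial K := by
  intro K
  induction K with
  | zero =>
    intro a
    have h0 : ∀ (o : Fin 0 → Fin d) (v : Fin d), cnt o v = 0 := by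
      intro o v; rw [cnt_eq_sum]; simp
    simp [h0]
  | succ K ih =>
    intro a
    have e := Fin.consEquiv (fun _ : Fin (K+1) => Fin d)
    rw [← Fintype.sum_equiv (Fin.consEquiv (fun _ : Fin (K+1) => Fin d))
      (fun p => ∏ v, (a v + cnt (Fin.cons p.1 p.2) v).factorial)
      (fun o => ∏ v, (a v + cnt o v).factorial) (fun p => rfl)]
    rw [Fintype.sum_prod_type]
    have hsummand : ∀ (w : Fin d) (o : Fin K → Fin d),
        (∏ v, (a v + cnt (Fin.cons w o) v).factorial)
        = ∏ v, ((a v + if w = v then 1 else 0) + cnt o v).factorial := by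
      intro w o
      refine Finset.prod_congr rfl fun v _ => ?_
      rw [cnt_cons, ← Nat.add_assoc]
    have hprod : ∀ w : Fin d,
        (∏ v, (a v + if w = v then 1 else 0).factorial)
          = (a w + 1) * ∏ v, (a v).factorial := by
      intro w
      have h1 : ∀ v : Fin d, (a v + if w = v then 1 else 0).factorial
          = (a v).factorial * (if w = v then a v + 1 else 1) := by
        intro v; by_cases h : w = v <;> simp [h, Nat.factorial_succ, Nat.mul_comm]
      simp_rw [h1]
      rw [Finset.prod_mul_distrib, Finset.prod_ite_eq]
      simp [Nat.mul_comm]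
    have hsum1 : ∀ w : Fin d, (∑ v, (a v + if w = v then 1 else 0)) = (∑ v, a v) + 1 := by
      intro w
      rw [Finset.sum_add_distrib, Finset.sum_ite_eq]
      simp
    calc ∑ w : Fin d, ∑ o : Fin K → Fin d, ∏ v, (a v + cnt (Fin.cons w o) v).factorial
        = ∑ w : Fin d, ((a w + 1) * ∏ v, (a v).factorial)
            * ((∑ v, a v) + 1 + d).ascFactorial K := by
          refine Finset.sum_congr rfl fun w _ => ?_
          simp_rw [hsummand w]
          rw [ih (fun v => a v + if w = v then 1 else 0), hprod w, hsum1 w]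
      _ = (∑ w : Fin d, (a w + 1)) * ((∏ v, (a v).factorial)
            * ((∑ v, a v) + 1 + d).ascFactorial K) := by
          rw [Finset.sum_mul]
          refine Finset.sum_congr rfl fun w _ => by ring
      _ = (∏ v, (a v).factorial) * ((∑ v, a v) + d).ascFactorial (K+1) := by
          rw [Finset.sum_add_distrib, Finset.sum_const, Finset.card_univ, Fintype.card_fin,
            asc_succ_left]
          have : (∑ v, a v) + 1 + d = (∑ v, a v) + d + 1 := by omega
          rw [this]
          ring

lemma dS_mul_factorial {d : ℕ} (hd : 1 ≤ d) (M : ℕ) :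
    dS d M * M.factorial = d.ascFactorial M := by
  rw [Nat.ascFactorial_eq_factorial_mul_choose' d M, dS]
  have h2 : (M + d - 1).choose (d - 1) = (M + d - 1).choose M := by
    rw [show d - 1 = M + d - 1 - M by omega, Nat.choose_symm (by omega : M ≤ M + d - 1)]
  rw [h2, show d + M - 1 = M + d - 1 by omega, Nat.mul_comm]

lemma asc_mul_asc (d N K : ℕ) :
    d.ascFactorial (N + K) = d.ascFactorial N * (d + N).ascFactorial K := by
  induction K with
  | zero => simp
  | succ K ih =>
    rw [← Nat.add_assoc, Nat.ascFactorial_succ, ih, Nat.ascFactorial_succ, Nat.add_assoc]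
    ring

lemma symProj_apply {d M : ℕ} (x y : Fin M → Fin d) :
    symProj d M x y = ((M.factorial : ℂ))⁻¹ *
      (if ∀ v, cnt x v = cnt y v then ((∏ v, (cnt x v).factorial : ℕ) : ℂ) else 0) := by
  rw [symProj]
  simp only [Matrix.smul_apply, Matrix.sum_apply, permMat, Matrix.of_apply, smul_eq_mul]
  congr 1
  rw [Finset.sum_boole]
  have hcard : ({π : Equiv.Perm (Fin M) | x = y ∘ ⇑π.symm} : Finset _).card
      = (Finset.univ.filter fun π : Equiv.Perm (Fin M) => y ∘ π = x).card := by
    apply Finset.card_equiv (Equiv.inv (Equiv.Perm (Fin M)))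
    intro π
    simp only [Finset.mem_filter, Finset.mem_univ, true_and, Equiv.inv_apply,
      Equiv.Perm.inv_def]
    exact eq_comm
  rw [hcard, card_perm_eq y x]
  by_cases h : ∀ v, cnt x v = cnt y v
  · rw [if_pos h, if_pos (fun v => (h v).symm)]
    norm_cast
    exact Finset.prod_congr rfl fun v _ => by rw [h v]
  · rw [if_neg h, if_neg (fun hc => h (fun v => (hc v).symm)), Nat.cast_zero]

lemma symProj_isHermitian (d M : ℕ) : (symProj d M).IsHermitian := by
  ext x y
  rw [Matrix.conjTranspose_apply, symProj_apply, symProj_apply]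
  by_cases h : ∀ v, cnt x v = cnt y v
  · rw [if_pos (fun v => (h v).symm), if_pos h]
    rw [show (∏ v, (cnt y v).factorial) = ∏ v, (cnt x v).factorial from
      Finset.prod_congr rfl fun v _ => by rw [h v]]
    simp
  · rw [if_neg (fun hc => h (fun v => (hc v).symm)), if_neg h]
    simp

lemma permMat_mul (d M : ℕ) (π τ : Equiv.Perm (Fin M)) :
    permMat d M π * permMat d M τ = permMat d M (π * τ) := by
  ext x y
  rw [Matrix.mul_apply]
  simp only [permMat, Matrix.of_apply]
  rw [Finset.sum_eq_single (y ∘ ⇑τ.symm)]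
  · have : y ∘ ⇑τ.symm ∘ ⇑π.symm = y ∘ ⇑(π * τ).symm := rfl
    simp [Function.comp_assoc]
    rfl
  · intro z _ hz
    rw [if_neg (fun hc => hz hc), mul_zero]
  · intro h; exact absurd (Finset.mem_univ _) h

lemma sum_permMat_mul (d M : ℕ) :
    (∑ π : Equiv.Perm (Fin M), permMat d M π) * (∑ τ : Equiv.Perm (Fin M), permMat d M τ)
      = (M.factorial : ℂ) • ∑ π : Equiv.Perm (Fin M), permMat d M π := by
  rw [Finset.sum_mul_sum]
  have h1 : ∀ π : Equiv.Perm (Fin M),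
      ∑ τ : Equiv.Perm (Fin M), permMat d M π * permMat d M τ
        = ∑ σ : Equiv.Perm (Fin M), permMat d M σ := by
    intro π
    simp_rw [permMat_mul]
    exact Fintype.sum_equiv (Equiv.mulLeft π) _ _ (fun τ => rfl)
  calc (∑ π : Equiv.Perm (Fin M), ∑ τ : Equiv.Perm (Fin M), permMat d M π * permMat d M τ)
      = ∑ _π : Equiv.Perm (Fin M), ∑ σ : Equiv.Perm (Fin M), permMat d M σ :=
        Finset.sum_congr rfl fun π _ => h1 π
    _ = (M.factorial : ℂ) • ∑ π : Equiv.Perm (Fin M), permMat d M π := by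
        rw [Finset.sum_const, Finset.card_univ, Fintype.card_perm, Fintype.card_fin]
        exact (Nat.cast_smul_eq_nsmul ℂ _ _).symm

lemma symProj_mul_self (d M : ℕ) : symProj d M * symProj d M = symProj d M := by
  rw [symProj, Matrix.smul_mul, Matrix.mul_smul, sum_permMat_mul, smul_smul, smul_smul]
  congr 1
  have : (M.factorial : ℂ) ≠ 0 := Nat.cast_ne_zero.mpr (Nat.factorial_ne_zero M)
  field_simp

lemma symProj_posSemidef (d M : ℕ) : (symProj d M).PosSemidef := by
  have h := Matrix.posSemidef_conjTranspose_mul_self (symProj d M)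
  rwa [(symProj_isHermitian d M).eq, symProj_mul_self] at h

def pairEquiv (d N K : ℕ) : ((Fin N → Fin d) × (Fin K → Fin d)) ≃ (Fin (N+K) → Fin d) :=
  (Equiv.sumArrowEquivProdArrow _ _ _).symm.trans
    (Equiv.arrowCongr finSumFinEquiv (Equiv.refl _))

lemma pairEquiv_apply (d N K : ℕ) (p : (Fin N → Fin d) × (Fin K → Fin d)) :
    pairEquiv d N K p = pairToFun d N K p.1 p.2 := by
  funext i
  rfl

lemma symProjNK_eq (d N K : ℕ) :
    symProjNK d N K = (symProj d (N+K)).submatrix (pairEquiv d N K) (pairEquiv d N K) := by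
  ext p q
  rw [symProjNK, Matrix.of_apply, Matrix.submatrix_apply, pairEquiv_apply, pairEquiv_apply]

lemma cnt_pair {d N K : ℕ} (x : Fin N → Fin d) (o : Fin K → Fin d) (v : Fin d) :
    cnt (pairToFun d N K x o) v = cnt x v + cnt o v := by
  rw [cnt, Finset.card_filter, cnt, Finset.card_filter, cnt, Finset.card_filter]
  simp only [pairToFun]
  exact (Equiv.sum_comp finSumFinEquiv.symm
    (fun s => if Sum.elim x o s = v then 1 else 0) (M := ℕ)).trans (Fintype.sum_sum_type _)

lemma dS_pos {d : ℕ} (hd : 1 ≤ d) (M : ℕ) : 0 < dS d M :=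
  Nat.choose_pos (by omega)

lemma sum_symProj_pair {d N K : ℕ} (hd : 1 ≤ d) (x x' : Fin N → Fin d) :
    ∑ o : Fin K → Fin d, symProj d (N+K) (pairToFun d N K x o) (pairToFun d N K x' o)
      = ((dS d (N+K) : ℂ) / (dS d N : ℂ)) * symProj d N x x' := by
  have h2 : ((N.factorial : ℂ)) ≠ 0 := Nat.cast_ne_zero.mpr (Nat.factorial_ne_zero N)
  have h1 : (((N+K).factorial : ℂ)) ≠ 0 := Nat.cast_ne_zero.mpr (Nat.factorial_ne_zero _)
  have h3 : ((dS d N : ℂ)) ≠ 0 := Nat.cast_ne_zero.mpr (dS_pos hd N).ne'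
  simp_rw [symProj_apply, cnt_pair]
  have hcond : ∀ o : Fin K → Fin d,
      (if (∀ v, cnt x v + cnt o v = cnt x' v + cnt o v)
        then ((∏ v, (cnt x v + cnt o v).factorial : ℕ) : ℂ) else 0)
      = if (∀ v, cnt x v = cnt x' v)
        then ((∏ v, (cnt x v + cnt o v).factorial : ℕ) : ℂ) else 0 := by
    intro o
    refine if_congr ⟨fun h v => by have := h v; omega, fun h v => by rw [h v]⟩ rfl rfl
  simp_rw [hcond]
  by_cases hc : ∀ v, cnt x v = cnt x' v
  · simp only [if_pos hc]
    rw [← Finset.mul_sum, ← Nat.cast_sum]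
    rw [key_sum d K (fun v => cnt x v), cnt_sum]
    have hnat : (N+d).ascFactorial K * (dS d N * N.factorial)
        = dS d (N+K) * (N+K).factorial := by
      rw [dS_mul_factorial hd N, dS_mul_factorial hd (N+K), asc_mul_asc d N K,
        Nat.add_comm N d]
      ring
    have hC : ((N+d).ascFactorial K : ℂ) * ((dS d N : ℂ) * (N.factorial : ℂ))
        = (dS d (N+K) : ℂ) * ((N+K).factorial : ℂ) := by exact_mod_cast hnat
    push_cast
    field_simp
    ring_nf
    ring_nf at hC
    linear_combination hC
  · simp only [if_neg hc]
    simp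

lemma trace_symProj {d M : ℕ} (hd : 1 ≤ d) : (symProj d M).trace = (dS d M : ℂ) := by
  have hM : ((M.factorial : ℂ)) ≠ 0 := Nat.cast_ne_zero.mpr (Nat.factorial_ne_zero M)
  have htr : (symProj d M).trace = ∑ x : Fin M → Fin d, symProj d M x x := rfl
  rw [htr]
  have hdiag : ∀ x : Fin M → Fin d, symProj d M x x
      = (M.factorial : ℂ)⁻¹ * ((∏ v, (cnt x v).factorial : ℕ) : ℂ) := by
    intro x; rw [symProj_apply, if_pos (fun v => rfl)]
  simp_rw [hdiag]
  rw [← Finset.mul_sum, ← Nat.cast_sum]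
  have h := key_sum d M (fun _ => 0)
  simp only [Nat.zero_add, Nat.factorial_zero, Finset.prod_const_one, Finset.sum_const_zero,
    Nat.one_mul, Nat.add_zero] at h
  rw [h, ← dS_mul_factorial hd M]
  push_cast
  field_simp

def embPerm (N K : ℕ) (τ : Equiv.Perm (Fin N)) : Equiv.Perm (Fin (N+K)) :=
  finSumFinEquiv.permCongr (Equiv.sumCongr τ (Equiv.refl (Fin K)))

lemma embPerm_symm (N K : ℕ) (τ : Equiv.Perm (Fin N)) :
    (embPerm N K τ).symm = embPerm N K τ.symm := by
  refine Equiv.ext fun i => ?_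
  rw [Equiv.symm_apply_eq]
  simp only [embPerm, Equiv.permCongr_apply, Equiv.symm_apply_apply]
  rcases h : finSumFinEquiv.symm i with a | b <;> simp [h] <;>
    simpa using (Equiv.symm_apply_eq _).mp h

lemma pairToFun_comp_embPerm_symm {d N K : ℕ} (x : Fin N → Fin d) (o : Fin K → Fin d)
    (τ : Equiv.Perm (Fin N)) :
    pairToFun d N K x o ∘ ⇑(embPerm N K τ).symm = pairToFun d N K (x ∘ ⇑τ.symm) o := by
  rw [embPerm_symm]
  funext i
  simp only [pairToFun, Function.comp_apply, embPerm, Equiv.permCongr_apply,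
    Equiv.symm_apply_apply]
  rcases h : finSumFinEquiv.symm i with a | b <;> simp [h]

lemma pairToFun_inj {d N K : ℕ} {x x' : Fin N → Fin d} {o o' : Fin K → Fin d} :
    pairToFun d N K x o = pairToFun d N K x' o' ↔ (x = x' ∧ o = o') := by
  constructor
  · intro h
    have h2 := (pairEquiv d N K).injective (a₁ := (x, o)) (a₂ := (x', o'))
      (by rw [pairEquiv_apply, pairEquiv_apply]; exact h)
    exact ⟨congrArg Prod.fst h2, congrArg Prod.snd h2⟩
  · rintro ⟨rfl, rfl⟩; rfl

lemma permMat_embPerm {d N K : ℕ} (τ : Equiv.Perm (Fin N)) (x x' : Fin N → Fin d)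
    (o o' : Fin K → Fin d) :
    permMat d (N+K) (embPerm N K τ) (pairToFun d N K x o) (pairToFun d N K x' o')
      = if (x = x' ∘ ⇑τ.symm ∧ o = o') then 1 else 0 := by
  rw [permMat, Matrix.of_apply, pairToFun_comp_embPerm_symm]
  exact if_congr pairToFun_inj rfl rfl

lemma kron_one_eq_submatrix (d N K : ℕ) :
    (symProj d N ⊗ₖ (1 : Matrix (Fin K → Fin d) (Fin K → Fin d) ℂ))
      = (((N.factorial : ℂ))⁻¹ •
          ∑ τ : Equiv.Perm (Fin N), permMat d (N+K) (embPerm N K τ)).submatrix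
        (pairEquiv d N K) (pairEquiv d N K) := by
  ext p q
  rw [Matrix.submatrix_apply, Matrix.smul_apply, Matrix.sum_apply]
  simp_rw [pairEquiv_apply, permMat_embPerm]
  have hsplit : ∀ τ : Equiv.Perm (Fin N),
      (if (p.1 = q.1 ∘ ⇑τ.symm ∧ p.2 = q.2) then (1:ℂ) else 0)
        = (if p.1 = q.1 ∘ ⇑τ.symm then (1:ℂ) else 0) * (if p.2 = q.2 then (1:ℂ) else 0) := by
    intro τ
    by_cases h1 : p.1 = q.1 ∘ ⇑τ.symm <;> by_cases h2 : p.2 = q.2 <;>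
      simp [h1, h2]
  simp_rw [hsplit]
  rw [← Finset.sum_mul]
  rw [Matrix.kroneckerMap_apply, symProj, Matrix.smul_apply, Matrix.sum_apply]
  simp only [permMat, Matrix.of_apply, Matrix.one_apply, smul_eq_mul]
  ring

lemma symProj_mul_emb (d N K : ℕ) :
    symProj d (N+K) * (((N.factorial : ℂ))⁻¹ •
        ∑ τ : Equiv.Perm (Fin N), permMat d (N+K) (embPerm N K τ))
      = symProj d (N+K) := by
  have hN : ((N.factorial : ℂ)) ≠ 0 := Nat.cast_ne_zero.mpr (Nat.factorial_ne_zero N)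
  rw [symProj, Matrix.smul_mul, Matrix.mul_smul, smul_smul, Finset.sum_mul_sum]
  have h1 : ∀ π : Equiv.Perm (Fin (N+K)), ∀ τ : Equiv.Perm (Fin N),
      permMat d (N+K) π * permMat d (N+K) (embPerm N K τ)
        = permMat d (N+K) (π * embPerm N K τ) := fun π τ => permMat_mul d (N+K) π _
  simp_rw [h1]
  rw [Finset.sum_comm]
  have h2 : ∀ τ : Equiv.Perm (Fin N),
      (∑ π : Equiv.Perm (Fin (N+K)), permMat d (N+K) (π * embPerm N K τ))
        = ∑ π : Equiv.Perm (Fin (N+K)), permMat d (N+K) π := by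
    intro τ
    exact Fintype.sum_equiv (Equiv.mulRight (embPerm N K τ)) _ _ (fun π => rfl)
  simp_rw [h2]
  rw [Finset.sum_const, Finset.card_univ, Fintype.card_perm, Fintype.card_fin,
    ← Nat.cast_smul_eq_nsmul ℂ, smul_smul]
  congr 1
  rw [mul_assoc, inv_mul_cancel₀ hN, mul_one]

lemma smul_posSemidef {n : Type*} [Fintype n] {A : Matrix n n ℂ} (hA : A.PosSemidef)
    {c : ℂ} (hc : 0 ≤ c) : (c • A).PosSemidef := by
  have him : c.im = 0 := by
    rw [Complex.le_def] at hc
    exact hc.2.symm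
  have hstar : star c = c := by
    rw [Complex.star_def]
    exact Complex.conj_eq_iff_im.mpr him
  constructor
  · rw [Matrix.IsHermitian, Matrix.conjTranspose_smul, hstar, hA.1.eq]
  · exact (hA.smul hc).2

lemma kron_posSemidef {n m : Type*} [Fintype n] [Fintype m] [DecidableEq n] [DecidableEq m]
    {A : Matrix n n ℂ} {B : Matrix m m ℂ} (hA : A.PosSemidef) (hB : B.PosSemidef) :
    (A ⊗ₖ B).PosSemidef := by
  exact hA.kronecker hB

lemma one_sub_symProj_posSemidef (d N : ℕ) :
    ((1 : Matrix (Fin N → Fin d) (Fin N → Fin d) ℂ) - symProj d N).PosSemidef := by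
  have hH : ((1 : Matrix (Fin N → Fin d) (Fin N → Fin d) ℂ) - symProj d N).IsHermitian :=
    Matrix.IsHermitian.sub Matrix.isHermitian_one (symProj_isHermitian d N)
  have hsq : ((1 : Matrix (Fin N → Fin d) (Fin N → Fin d) ℂ) - symProj d N)
      * ((1 : Matrix (Fin N → Fin d) (Fin N → Fin d) ℂ) - symProj d N)
      = (1 : Matrix (Fin N → Fin d) (Fin N → Fin d) ℂ) - symProj d N := by
    rw [Matrix.sub_mul, Matrix.one_mul, Matrix.mul_sub, Matrix.mul_one, symProj_mul_self]
    abel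
  have h := Matrix.posSemidef_conjTranspose_mul_self
    ((1 : Matrix (Fin N → Fin d) (Fin N → Fin d) ℂ) - symProj d N)
  rwa [hH.eq, hsq] at h

lemma symProjNK_posSemidef (d N K : ℕ) : (symProjNK d N K).PosSemidef := by
  rw [symProjNK_eq]
  exact (symProj_posSemidef d (N+K)).submatrix _

lemma trOut_smul {d N K : ℕ} (c : ℂ)
    (J : Matrix ((Fin N → Fin d) × (Fin K → Fin d)) ((Fin N → Fin d) × (Fin K → Fin d)) ℂ) :
    trOut (c • J) = c • trOut J := by
  ext x x'
  simp [trOut, Finset.mul_sum]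

lemma trOut_add {d N K : ℕ}
    (J₁ J₂ : Matrix ((Fin N → Fin d) × (Fin K → Fin d)) ((Fin N → Fin d) × (Fin K → Fin d)) ℂ) :
    trOut (J₁ + J₂) = trOut J₁ + trOut J₂ := by
  ext x x'
  simp [trOut, Finset.sum_add_distrib]

lemma trOut_kron {d N K : ℕ} (A : Matrix (Fin N → Fin d) (Fin N → Fin d) ℂ)
    (σ : Matrix (Fin K → Fin d) (Fin K → Fin d) ℂ) :
    trOut (A ⊗ₖ σ) = σ.trace • A := by
  ext x x'
  simp only [trOut, Matrix.of_apply, Matrix.kroneckerMap_apply, Matrix.smul_apply,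
    Matrix.trace, Matrix.diag_apply, smul_eq_mul]
  rw [← Finset.mul_sum, mul_comm]

lemma trOut_symProjNK {d N K : ℕ} (hd : 1 ≤ d) :
    trOut (symProjNK d N K) = ((dS d (N+K) : ℂ) / (dS d N : ℂ)) • symProj d N := by
  ext x x'
  simp only [trOut, Matrix.of_apply, symProjNK, Matrix.smul_apply, smul_eq_mul]
  exact sum_symProj_pair hd x x'

lemma trace_submatrix_equiv {α β : Type*} [Fintype α] [Fintype β] (A : Matrix β β ℂ)
    (e : α ≃ β) : (A.submatrix e e).trace = A.trace := by
  rw [Matrix.trace, Matrix.trace]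
  exact Fintype.sum_equiv e _ _ (fun p => rfl)

lemma symProjNK_mul_self (d N K : ℕ) :
    symProjNK d N K * symProjNK d N K = symProjNK d N K := by
  rw [symProjNK_eq, Matrix.submatrix_mul_equiv, symProj_mul_self]

lemma symProjNK_mul_kron_one (d N K : ℕ) :
    symProjNK d N K * (symProj d N ⊗ₖ (1 : Matrix (Fin K → Fin d) (Fin K → Fin d) ℂ))
      = symProjNK d N K := by
  rw [symProjNK_eq, kron_one_eq_submatrix, Matrix.submatrix_mul_equiv, symProj_mul_emb]

/-- The estimation-based channel is a valid quantum channel (PSD, trace-preserving Choi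
operator) attaining average fidelity `d_S^N / d_S^{N+K}`, i.e. `Tr(J₀ Π_sym^{(N+K)}) = d_S^N`. -/
theorem stmt1 (d N K : ℕ) (hd : 2 ≤ d) (hN : 1 ≤ N) (hK : 1 ≤ K)
    (σ : Matrix (Fin K → Fin d) (Fin K → Fin d) ℂ)
    (hσ : σ.PosSemidef) (hσtr : σ.trace = 1) :
    (estimChoi d N K σ).PosSemidef ∧
    trOut (estimChoi d N K σ) = 1 ∧
    (estimChoi d N K σ * symProjNK d N K).trace = (dS d N : ℂ) := by
  have hd1 : 1 ≤ d := by omega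
  have hdSN : ((dS d N : ℂ)) ≠ 0 := Nat.cast_ne_zero.mpr (dS_pos hd1 N).ne'
  have hdSNK : ((dS d (N+K) : ℂ)) ≠ 0 := Nat.cast_ne_zero.mpr (dS_pos hd1 (N+K)).ne'
  have hc : (0 : ℂ) ≤ (dS d N : ℂ) / (dS d (N+K) : ℂ) := by
    have h1 : ((dS d N : ℂ)) / ((dS d (N+K) : ℂ))
        = (((dS d N : ℝ) / (dS d (N+K) : ℝ) : ℝ) : ℂ) := by push_cast; ring
    rw [h1]
    exact_mod_cast Complex.zero_le_real.mpr (div_nonneg (Nat.cast_nonneg _) (Nat.cast_nonneg _))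
  refine ⟨?_, ?_, ?_⟩
  · exact Matrix.PosSemidef.add
      (smul_posSemidef (symProjNK_posSemidef d N K) hc)
      (kron_posSemidef (one_sub_symProj_posSemidef d N) hσ)
  · rw [estimChoi, trOut_add, trOut_smul, trOut_symProjNK hd1, trOut_kron, hσtr, one_smul,
      smul_smul]
    rw [show ((dS d N : ℂ) / (dS d (N+K) : ℂ)) * ((dS d (N+K) : ℂ) / (dS d N : ℂ)) = 1 by
      field_simp]
    rw [one_smul]
    exact add_sub_cancel _ _
  · rw [estimChoi, Matrix.add_mul, Matrix.smul_mul, symProjNK_mul_self]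
    have hmix : (((1 : Matrix (Fin N → Fin d) (Fin N → Fin d) ℂ) - symProj d N) ⊗ₖ σ)
        = ((1 : Matrix (Fin N → Fin d) (Fin N → Fin d) ℂ) ⊗ₖ σ)
          - (symProj d N ⊗ₖ (1 : Matrix (Fin K → Fin d) (Fin K → Fin d) ℂ))
            * ((1 : Matrix (Fin N → Fin d) (Fin N → Fin d) ℂ) ⊗ₖ σ) := by
      rw [← Matrix.mul_kronecker_mul, Matrix.mul_one, Matrix.one_mul]
      ext p q
      simp only [Matrix.kroneckerMap_apply, Matrix.sub_apply]
      ring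
    rw [hmix, Matrix.sub_mul, Matrix.trace_add, Matrix.trace_smul, Matrix.trace_sub]
    have hcyc : (((symProj d N ⊗ₖ (1 : Matrix (Fin K → Fin d) (Fin K → Fin d) ℂ))
          * ((1 : Matrix (Fin N → Fin d) (Fin N → Fin d) ℂ) ⊗ₖ σ)) * symProjNK d N K).trace
        = (((1 : Matrix (Fin N → Fin d) (Fin N → Fin d) ℂ) ⊗ₖ σ) * symProjNK d N K).trace := by
      rw [Matrix.mul_assoc, Matrix.trace_mul_comm, Matrix.mul_assoc,
        symProjNK_mul_kron_one]
    rw [hcyc, sub_self, add_zero, symProjNK_eq, trace_submatrix_equiv, trace_symProj hd1,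
      smul_eq_mul, div_mul_cancel₀ _ hdSNK]

end
end

section
/- Fix integers d ≥ 1, N ≥ 1, a complex number α, and let B be a complex matrix indexed by (Fin N → Fin d). Suppose that for every unit vector ψ : Fin d → ℂ (with ∑_i |ψ i|² = 1) one has ⟨ψ^{⊗N}, B ψ^{⊗N}⟩ = α. Then for every unit vector φ in the linear span of { ψ^{⊗N} : ψ : Fin d → ℂ } (the symmetric subspace of (ℂ^d)^{⊗N}), one has ⟨φ, B φ⟩ = α. -/
open BigOperators

noncomputable section

/-- The `N`-th tensor power `ψ^{⊗N}` of a vector `ψ : ℂ^d`. -/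
def tpow (d N : ℕ) (ψ : Fin d → ℂ) : (Fin N → Fin d) → ℂ :=
  fun x => ∏ i, ψ (x i)

/-- The sesquilinear form `⟨u, A v⟩ = ∑_{x,y} conj(u x) A(x,y) v(y)`. -/
def quadF {d N : ℕ} (u : (Fin N → Fin d) → ℂ)
    (A : Matrix (Fin N → Fin d) (Fin N → Fin d) ℂ) (v : (Fin N → Fin d) → ℂ) : ℂ :=
  ∑ x, ∑ y, (starRingEnd ℂ) (u x) * A x y * v y

section Stmt14Aux

variable {d N : ℕ} {A : Matrix (Fin N → Fin d) (Fin N → Fin d) ℂ}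

lemma quadF_sum_left {ι : Type*} (s : Finset ι) (f : ι → (Fin N → Fin d) → ℂ)
    (v : (Fin N → Fin d) → ℂ) :
    quadF (∑ i ∈ s, f i) A v = ∑ i ∈ s, quadF (f i) A v := by
  unfold quadF
  simp only [Finset.sum_apply, map_sum, Finset.sum_mul]
  exact (Finset.sum_congr rfl fun x _ => Finset.sum_comm).trans (Finset.sum_comm)

lemma quadF_sum_right {ι : Type*} (s : Finset ι) (g : ι → (Fin N → Fin d) → ℂ)
    (u : (Fin N → Fin d) → ℂ) :
    quadF u A (∑ i ∈ s, g i) = ∑ i ∈ s, quadF u A (g i) := by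
  unfold quadF
  simp only [Finset.sum_apply, Finset.mul_sum]
  exact (Finset.sum_congr rfl fun x _ => Finset.sum_comm).trans (Finset.sum_comm)

lemma quadF_smul_left (c : ℂ) (u v : (Fin N → Fin d) → ℂ) :
    quadF (c • u) A v = (starRingEnd ℂ) c * quadF u A v := by
  unfold quadF
  simp only [Pi.smul_apply, smul_eq_mul, map_mul, Finset.mul_sum]
  refine Finset.sum_congr rfl fun x _ => Finset.sum_congr rfl fun y _ => by ring

lemma quadF_smul_right (c : ℂ) (u v : (Fin N → Fin d) → ℂ) :
    quadF u A (c • v) = c * quadF u A v := by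
  unfold quadF
  simp only [Pi.smul_apply, smul_eq_mul, Finset.mul_sum]
  refine Finset.sum_congr rfl fun x _ => Finset.sum_congr rfl fun y _ => by ring

lemma quadF_add_left (u₁ u₂ v : (Fin N → Fin d) → ℂ) :
    quadF (u₁ + u₂) A v = quadF u₁ A v + quadF u₂ A v := by
  unfold quadF
  simp only [Pi.add_apply, map_add, add_mul, Finset.sum_add_distrib]

lemma quadF_add_right (u v₁ v₂ : (Fin N → Fin d) → ℂ) :
    quadF u A (v₁ + v₂) = quadF u A v₁ + quadF u A v₂ := by
  unfold quadF
  simp only [Pi.add_apply, mul_add, Finset.sum_add_distrib]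

lemma quadF_matrix_sub (B C : Matrix (Fin N → Fin d) (Fin N → Fin d) ℂ)
    (u v : (Fin N → Fin d) → ℂ) :
    quadF u (B - C) v = quadF u B v - quadF u C v := by
  unfold quadF
  simp only [Matrix.sub_apply, mul_sub, sub_mul, Finset.sum_sub_distrib]

lemma quadF_matrix_smul (c : ℂ) (C : Matrix (Fin N → Fin d) (Fin N → Fin d) ℂ)
    (u v : (Fin N → Fin d) → ℂ) :
    quadF u (c • C) v = c * quadF u C v := by
  unfold quadF
  simp only [Matrix.smul_apply, smul_eq_mul, Finset.mul_sum]
  refine Finset.sum_congr rfl fun x _ => Finset.sum_congr rfl fun y _ => by ring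

lemma quadF_one (u v : (Fin N → Fin d) → ℂ) :
    quadF u 1 v = ∑ x, (starRingEnd ℂ) (u x) * v x := by
  unfold quadF
  refine Finset.sum_congr rfl fun x _ => ?_
  rw [Finset.sum_eq_single x]
  · simp [Matrix.one_apply]
  · intro b _ hb
    simp [Matrix.one_apply, Ne.symm hb]
  · intro h
    exact absurd (Finset.mem_univ x) h

lemma quadF_zero_left (v : (Fin N → Fin d) → ℂ) : quadF (0 : (Fin N → Fin d) → ℂ) A v = 0 := by
  simp [quadF]

lemma quadF_zero_right (u : (Fin N → Fin d) → ℂ) : quadF u A (0 : (Fin N → Fin d) → ℂ) = 0 := by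
  simp [quadF]

lemma tpow_expand (ψ χ : Fin d → ℂ) (t : ℂ) :
    tpow d N (ψ + t • χ) =
      ∑ S : Finset (Fin N), t ^ Sᶜ.card •
        (fun x => (∏ i ∈ S, ψ (x i)) * ∏ i ∈ Sᶜ, χ (x i)) := by
  funext x
  simp only [tpow, Pi.add_apply, Pi.smul_apply, smul_eq_mul, Finset.sum_apply]
  rw [Finset.prod_add, Finset.powerset_univ]
  refine Finset.sum_congr rfl fun S _ => ?_
  rw [← Finset.compl_eq_univ_sdiff, Finset.prod_mul_distrib, Finset.prod_const]
  ring

lemma tpow_smul (c : ℂ) (ψ : Fin d → ℂ) : tpow d N (c • ψ) = c ^ N • tpow d N ψ := by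
  funext x
  simp [tpow, Finset.prod_mul_distrib, Finset.prod_const, Finset.card_univ, mul_comm]

lemma tpow_zero (hN : 1 ≤ N) : tpow d N (0 : Fin d → ℂ) = 0 := by
  funext x
  simp [tpow, Finset.prod_const, zero_pow (by omega : N ≠ 0)]

lemma conj_omega (n : ℕ) (hn : 0 < n) :
    (starRingEnd ℂ) (Complex.exp (2 * Real.pi * Complex.I / n)) =
      Complex.exp (2 * Real.pi * Complex.I / n) ^ (n - 1) := by
  set ω := Complex.exp (2 * Real.pi * Complex.I / n) with hω
  have hpow : ω ^ n = 1 := (Complex.isPrimitiveRoot_exp n hn.ne').pow_eq_one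
  have h1 : (starRingEnd ℂ) ω = ω⁻¹ := by
    rw [hω, ← Complex.exp_conj]
    · rw [← Complex.exp_neg]
      congr 1
      simp only [map_div₀, map_mul, Complex.conj_I, Complex.conj_ofReal, map_ofNat,
        map_natCast]
      ring
  rw [h1]
  have h2 : ω * ω ^ (n - 1) = 1 := by
    rw [mul_comm, ← pow_succ, Nat.sub_add_cancel hn]
    exact hpow
  exact (eq_inv_of_mul_eq_one_left (by rw [mul_comm]; exact h2)).symm

lemma root_sum (n : ℕ) (hn : 0 < n) (k : ℕ) :
    ∑ m ∈ Finset.range n, Complex.exp (2 * Real.pi * Complex.I / n) ^ (k * m) =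
      if n ∣ k then (n : ℂ) else 0 := by
  set ω := Complex.exp (2 * Real.pi * Complex.I / n) with hω
  have hprim := Complex.isPrimitiveRoot_exp n hn.ne'
  by_cases h : n ∣ k
  · simp only [if_pos h]
    have h1 : ω ^ k = 1 := by
      obtain ⟨j, rfl⟩ := h
      rw [pow_mul, hprim.pow_eq_one, one_pow]
    calc ∑ m ∈ Finset.range n, ω ^ (k * m)
        = ∑ m ∈ Finset.range n, (1:ℂ) := by
          refine Finset.sum_congr rfl fun m _ => ?_
          rw [pow_mul, h1, one_pow]
      _ = (n : ℂ) := by simp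
  · simp only [if_neg h]
    have h1 : ω ^ k ≠ 1 := fun hh => h ((hprim.pow_eq_one_iff_dvd k).mp hh)
    have h2 : (ω ^ k) ^ n = 1 := by
      rw [← pow_mul, mul_comm, pow_mul, hprim.pow_eq_one, one_pow]
    calc ∑ m ∈ Finset.range n, ω ^ (k * m)
        = ∑ m ∈ Finset.range n, (ω ^ k) ^ m := by
          refine Finset.sum_congr rfl fun m _ => ?_
          rw [← pow_mul]
      _ = ((ω ^ k) ^ n - 1) / (ω ^ k - 1) := geom_sum_eq h1 n
      _ = 0 := by rw [h2]; simp

lemma key (hN : 1 ≤ N) (C : Matrix (Fin N → Fin d) (Fin N → Fin d) ℂ)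
    (h : ∀ u : Fin d → ℂ, quadF (tpow d N u) C (tpow d N u) = 0)
    (ψ χ : Fin d → ℂ) : quadF (tpow d N ψ) C (tpow d N χ) = 0 := by
  set n := 2 * N + 1 with hn
  have hn0 : 0 < n := by omega
  set ω : ℂ := Complex.exp (2 * Real.pi * Complex.I / n) with hω
  set w : Finset (Fin N) → (Fin N → Fin d) → ℂ :=
    fun S => fun x => (∏ i ∈ S, ψ (x i)) * ∏ i ∈ Sᶜ, χ (x i) with hw
  set q : Finset (Fin N) → Finset (Fin N) → ℂ := fun S T => quadF (w S) C (w T) with hq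
  -- expansion of the diagonal condition
  have hexp : ∀ t : ℂ, ∑ S : Finset (Fin N), ∑ T : Finset (Fin N),
      (starRingEnd ℂ) t ^ Sᶜ.card * t ^ Tᶜ.card * q S T = 0 := by
    intro t
    have hdiag := h (ψ + t • χ)
    rw [tpow_expand, quadF_sum_left] at hdiag
    rw [← hdiag]
    refine Finset.sum_congr rfl fun S _ => ?_
    rw [quadF_sum_right]
    refine Finset.sum_congr rfl fun T _ => ?_
    rw [quadF_smul_left, quadF_smul_right, map_pow]
    ring
  -- exponent function
  set E : Finset (Fin N) → Finset (Fin N) → ℕ :=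
    fun S T => (n - N) + (n - 1) * Sᶜ.card + Tᶜ.card with hE
  -- the averaged sum is zero
  have hzero : ∑ S : Finset (Fin N), ∑ T : Finset (Fin N),
      q S T * ∑ m ∈ Finset.range n, ω ^ (E S T * m) = 0 := by
    have hterm : ∀ S T : Finset (Fin N),
        q S T * ∑ m ∈ Finset.range n, ω ^ (E S T * m)
          = ∑ m ∈ Finset.range n,
            ω ^ ((n - N) * m) *
              ((starRingEnd ℂ) (ω ^ m) ^ Sᶜ.card * (ω ^ m) ^ Tᶜ.card * q S T) := by
      intro S T
      rw [Finset.mul_sum]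
      refine Finset.sum_congr rfl fun m _ => ?_
      rw [map_pow, conj_omega n hn0, ← hω, ← pow_mul, ← pow_mul, ← pow_mul]
      have hE' : E S T * m = (n - N) * m + ((n - 1) * (m * Sᶜ.card) + m * Tᶜ.card) := by
        simp only [hE]
        ring
      rw [hE', pow_add, pow_add]
      ring
    calc ∑ S : Finset (Fin N), ∑ T : Finset (Fin N),
        q S T * ∑ m ∈ Finset.range n, ω ^ (E S T * m)
        = ∑ S : Finset (Fin N), ∑ T : Finset (Fin N), ∑ m ∈ Finset.range n,
            ω ^ ((n - N) * m) *
              ((starRingEnd ℂ) (ω ^ m) ^ Sᶜ.card * (ω ^ m) ^ Tᶜ.card * q S T) :=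
          Finset.sum_congr rfl fun S _ => Finset.sum_congr rfl fun T _ => hterm S T
      _ = ∑ m ∈ Finset.range n, ∑ S : Finset (Fin N), ∑ T : Finset (Fin N),
            ω ^ ((n - N) * m) *
              ((starRingEnd ℂ) (ω ^ m) ^ Sᶜ.card * (ω ^ m) ^ Tᶜ.card * q S T) :=
          (Finset.sum_congr rfl fun S _ => Finset.sum_comm).trans Finset.sum_comm
      _ = ∑ m ∈ Finset.range n, ω ^ ((n - N) * m) *
            (∑ S : Finset (Fin N), ∑ T : Finset (Fin N),
              (starRingEnd ℂ) (ω ^ m) ^ Sᶜ.card * (ω ^ m) ^ Tᶜ.card * q S T) := by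
          refine Finset.sum_congr rfl fun m _ => ?_
          rw [Finset.mul_sum]
          exact Finset.sum_congr rfl fun S _ => by rw [Finset.mul_sum]
      _ = 0 := by
          refine Finset.sum_eq_zero fun m _ => ?_
          rw [hexp (ω ^ m), mul_zero]
  -- divisibility characterisation
  have hdvd : ∀ S T : Finset (Fin N), (n ∣ E S T) ↔ (S = Finset.univ ∧ T = ∅) := by
    intro S T
    have ha : Sᶜ.card ≤ N := by
      have := Finset.card_le_univ Sᶜ
      simpa using this
    have hb : Tᶜ.card ≤ N := by
      have := Finset.card_le_univ Tᶜ
      simpa using this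
    constructor
    · intro hdv
      have hz : (n : ℤ) ∣ (E S T : ℤ) := Int.natCast_dvd_natCast.mpr hdv
      have heq : (E S T : ℤ) = n * (1 + Sᶜ.card) - ((N : ℤ) + Sᶜ.card - Tᶜ.card) := by
        rw [hE]
        push_cast [Nat.cast_sub (by omega : N ≤ n), Nat.cast_sub (by omega : 1 ≤ n)]
        ring
      have hz2 : (n : ℤ) ∣ ((N : ℤ) + Sᶜ.card - Tᶜ.card) := by
        have := dvd_sub (Dvd.intro _ rfl : (n:ℤ) ∣ n * (1 + Sᶜ.card)) hz
        rwa [heq, sub_sub_cancel] at this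
      have hsmall : (N : ℤ) + Sᶜ.card - Tᶜ.card = 0 := by
        refine Int.eq_zero_of_abs_lt_dvd hz2 ?_
        have h1 : (0:ℤ) ≤ (N : ℤ) + Sᶜ.card - Tᶜ.card := by
          have : (Tᶜ.card : ℤ) ≤ N := by exact_mod_cast hb
          omega
        have h2 : (N : ℤ) + Sᶜ.card - Tᶜ.card ≤ 2 * N := by
          have : (Sᶜ.card : ℤ) ≤ N := by exact_mod_cast ha
          omega
        rw [abs_of_nonneg h1]
        omega
      have ha0 : Sᶜ.card = 0 := by omega
      have hbN : Tᶜ.card = N := by omega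
      constructor
      · have : Sᶜ = ∅ := Finset.card_eq_zero.mp ha0
        rwa [Finset.compl_eq_empty_iff] at this
      · have : Tᶜ = Finset.univ := by
          apply Finset.eq_univ_of_card
          simpa using hbN
        rwa [Finset.compl_eq_univ_iff] at this
    · rintro ⟨rfl, rfl⟩
      simp only [hE, Finset.compl_univ, Finset.card_empty, Finset.compl_empty,
        Finset.card_univ, Fintype.card_fin, mul_zero, add_zero]
      have h3 : n - N + N = n := by omega
      rw [h3]
  -- evaluate the sum using root_sum
  have heval : ∑ S : Finset (Fin N), ∑ T : Finset (Fin N),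
      q S T * ∑ m ∈ Finset.range n, ω ^ (E S T * m)
        = (n : ℂ) * q Finset.univ ∅ := by
    have hv : ∀ S T : Finset (Fin N),
        q S T * ∑ m ∈ Finset.range n, ω ^ (E S T * m)
          = if S = Finset.univ ∧ T = ∅ then (n : ℂ) * q S T else 0 := by
      intro S T
      rw [hω, root_sum n hn0 (E S T)]
      by_cases hc : S = Finset.univ ∧ T = ∅
      · rw [if_pos ((hdvd S T).mpr hc), if_pos hc]; ring
      · rw [if_neg (fun hh => hc ((hdvd S T).mp hh)), if_neg hc, mul_zero]
    rw [Finset.sum_congr rfl fun S _ => Finset.sum_congr rfl fun T _ => hv S T]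
    rw [Finset.sum_eq_single Finset.univ]
    · rw [Finset.sum_eq_single (∅ : Finset (Fin N))]
      · simp
      · intro T _ hT
        rw [if_neg (fun hh => hT hh.2)]
      · intro hh
        exact absurd (Finset.mem_univ _) hh
    · intro S _ hS
      refine Finset.sum_eq_zero fun T _ => ?_
      rw [if_neg (fun hh => hS hh.1)]
    · intro hh
      exact absurd (Finset.mem_univ _) hh
  have hfin : (n : ℂ) * q Finset.univ ∅ = 0 := by rw [← heval, hzero]
  have hq0 : q Finset.univ ∅ = 0 := by
    have hnne : (n : ℂ) ≠ 0 := Nat.cast_ne_zero.mpr hn0.ne'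
    exact (mul_eq_zero.mp hfin).resolve_left hnne
  have hwu : w Finset.univ = tpow d N ψ := by
    funext x
    simp [hw, tpow, Finset.compl_univ]
  have hwe : w ∅ = tpow d N χ := by
    funext x
    simp [hw, tpow, Finset.compl_empty]
  have hq0' : quadF (w Finset.univ) C (w ∅) = 0 := hq0
  rwa [hwu, hwe] at hq0'

lemma conj_mul_self (z : ℂ) : (starRingEnd ℂ) z * z = ((‖z‖ : ℂ)) ^ 2 := by
  rw [mul_comm, Complex.mul_conj, Complex.normSq_eq_norm_sq]
  push_cast
  ring

lemma norm_tpow (ψ : Fin d → ℂ) :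
    quadF (tpow d N ψ) (1 : Matrix (Fin N → Fin d) (Fin N → Fin d) ℂ) (tpow d N ψ)
      = (∑ i, ((‖ψ i‖ : ℂ)) ^ 2) ^ N := by
  rw [quadF_one]
  have h1 : ∀ x : Fin N → Fin d,
      (starRingEnd ℂ) (tpow d N ψ x) * tpow d N ψ x = ∏ i, ((‖ψ (x i)‖ : ℂ)) ^ 2 := by
    intro x
    simp only [tpow, map_prod, ← Finset.prod_mul_distrib]
    exact Finset.prod_congr rfl fun i _ => conj_mul_self _
  rw [Finset.sum_congr rfl fun x _ => h1 x]
  calc ∑ x : Fin N → Fin d, ∏ i, ((‖ψ (x i)‖ : ℂ)) ^ 2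
      = ∑ x ∈ Fintype.piFinset (fun _ : Fin N => (Finset.univ : Finset (Fin d))),
          ∏ i, ((‖ψ (x i)‖ : ℂ)) ^ 2 := by rw [Fintype.piFinset_univ]
    _ = ∏ _i : Fin N, ∑ j, ((‖ψ j‖ : ℂ)) ^ 2 :=
        (Finset.prod_univ_sum (fun _ : Fin N => (Finset.univ : Finset (Fin d)))
          (fun _ j => ((‖ψ j‖ : ℂ)) ^ 2)).symm
    _ = (∑ j, ((‖ψ j‖ : ℂ)) ^ 2) ^ N := by
        rw [Finset.prod_const, Finset.card_univ, Fintype.card_fin]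

lemma quadF_norm (φ : (Fin N → Fin d) → ℂ) :
    quadF φ (1 : Matrix (Fin N → Fin d) (Fin N → Fin d) ℂ) φ = ((∑ x, ‖φ x‖ ^ 2 : ℝ) : ℂ) := by
  rw [quadF_one]
  push_cast
  exact Finset.sum_congr rfl fun x _ => conj_mul_self _

lemma diag (hN : 1 ≤ N) (α : ℂ) (B : Matrix (Fin N → Fin d) (Fin N → Fin d) ℂ)
    (hB : ∀ ψ : Fin d → ℂ, (∑ i, ‖ψ i‖ ^ 2) = 1 →
      quadF (tpow d N ψ) B (tpow d N ψ) = α) :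
    ∀ u : Fin d → ℂ, quadF (tpow d N u) (B - α • 1) (tpow d N u) = 0 := by
  intro u
  rw [quadF_matrix_sub, quadF_matrix_smul]
  by_cases hu : u = 0
  · subst hu
    rw [tpow_zero hN, quadF_zero_left, quadF_zero_left, mul_zero, sub_zero]
  · have hpos : 0 < ∑ i, ‖u i‖ ^ 2 := by
      have : ∃ i, u i ≠ 0 := by
        by_contra hc
        push_neg at hc
        exact hu (funext hc)
      obtain ⟨i, hi⟩ := this
      refine Finset.sum_pos' (fun j _ => by positivity) ⟨i, Finset.mem_univ i, pow_pos (norm_pos_iff.mpr hi) 2⟩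
    set r : ℝ := Real.sqrt (∑ i, ‖u i‖ ^ 2) with hr
    have hrpos : 0 < r := Real.sqrt_pos.mpr hpos
    have hr2 : r ^ 2 = ∑ i, ‖u i‖ ^ 2 := Real.sq_sqrt hpos.le
    set ψ : Fin d → ℂ := ((r : ℂ))⁻¹ • u with hψdef
    have hψ : (∑ i, ‖ψ i‖ ^ 2) = 1 := by
      simp only [hψdef, Pi.smul_apply, smul_eq_mul, norm_mul, mul_pow, norm_inv,
        Complex.norm_real, Real.norm_eq_abs, abs_of_pos hrpos]
      rw [← Finset.mul_sum, ← hr2]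
      field_simp
    have hu' : u = (r : ℂ) • ψ := by
      rw [hψdef, smul_smul]
      rw [mul_inv_cancel₀ (by exact_mod_cast hrpos.ne' : (r : ℂ) ≠ 0)]
      simp
    rw [hu', tpow_smul, quadF_smul_left, quadF_smul_right, quadF_smul_left, quadF_smul_right]
    rw [hB ψ hψ, norm_tpow]
    have hψc : (∑ i, ((‖ψ i‖ : ℂ)) ^ 2) = 1 := by
      have : ((∑ i, ‖ψ i‖ ^ 2 : ℝ) : ℂ) = 1 := by rw [hψ]; norm_num
      rw [← this]
      push_cast
      rfl
    rw [hψc, one_pow]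
    ring

end Stmt14Aux

/-- If `⟨ψ^{⊗N}, B ψ^{⊗N}⟩ = α` for all unit vectors `ψ`, then `⟨φ, B φ⟩ = α` for every
unit vector `φ` in the symmetric subspace (the span of the tensor powers). -/
theorem stmt14 (d N : ℕ) (hd : 1 ≤ d) (hN : 1 ≤ N) (α : ℂ)
    (B : Matrix (Fin N → Fin d) (Fin N → Fin d) ℂ)
    (hB : ∀ ψ : Fin d → ℂ, (∑ i, ‖ψ i‖ ^ 2) = 1 →
      quadF (tpow d N ψ) B (tpow d N ψ) = α) :
    ∀ φ : (Fin N → Fin d) → ℂ,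
      φ ∈ Submodule.span ℂ (Set.range (tpow d N)) →
      (∑ x, ‖φ x‖ ^ 2) = 1 → quadF φ B φ = α := by
  intro φ hφ hnorm
  set C : Matrix (Fin N → Fin d) (Fin N → Fin d) ℂ := B - α • 1 with hC
  have hdiag : ∀ u : Fin d → ℂ, quadF (tpow d N u) C (tpow d N u) = 0 := diag hN α B hB
  have hoff : ∀ ψ χ : Fin d → ℂ, quadF (tpow d N ψ) C (tpow d N χ) = 0 := key hN C hdiag
  have hright : ∀ ψ : Fin d → ℂ, ∀ v ∈ Submodule.span ℂ (Set.range (tpow d N)),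
      quadF (tpow d N ψ) C v = 0 := by
    intro ψ v hv
    induction hv using Submodule.span_induction with
    | mem x hx =>
        obtain ⟨χ, rfl⟩ := hx
        exact hoff ψ χ
    | zero => exact quadF_zero_right _
    | add x y _ _ hx hy => rw [quadF_add_right, hx, hy, add_zero]
    | smul c x _ hx => rw [quadF_smul_right, hx, mul_zero]
  have hboth : ∀ u ∈ Submodule.span ℂ (Set.range (tpow d N)),
      ∀ v ∈ Submodule.span ℂ (Set.range (tpow d N)), quadF u C v = 0 := by
    intro u hu
    induction hu using Submodule.span_induction with
    | mem x hx =>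
        obtain ⟨ψ, rfl⟩ := hx
        exact hright ψ
    | zero => exact fun v _ => quadF_zero_left v
    | add x y _ _ hx hy =>
        intro v hv
        rw [quadF_add_left, hx v hv, hy v hv, add_zero]
    | smul c x _ hx =>
        intro v hv
        rw [quadF_smul_left, hx v hv, mul_zero]
  have hspan : quadF φ C φ = 0 := hboth φ hφ φ hφ
  have h1 : quadF φ B φ - α * quadF φ 1 φ = 0 := by
    rw [← quadF_matrix_smul, ← quadF_matrix_sub]
    exact hspan
  rw [quadF_norm, hnorm] at h1
  push_cast at h1
  simpa using sub_eq_zero.mp h1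

end
end
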